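/- arXiv:1502.02855 — 2 statements merged into one kernel-verified Lean document; each statement's English description precedes it below -/
import Mathlib

section
/- Counting solutions of a quadratic congruence (contribution q^{k/2}): let F₀ be a p-adic field, p ≠ 2, with uniformizer π and residue field of size q. Let a ∈ F₀ with v(a) = k/2 for k even, and let t, s be integers with k < t. The set of classes ⋆ ∈ π^{max(0, t-s)}O/π^t O satisfying (⋆ - a)² ∈ a² + π^t O and v(⋆) = v(2a) (the '-1 branch', i.e. ⋆ ≡ 2a mod π^{t - k/2}) is nonempty iff t - s ≤ k/2, in which case it has exactly q^{k/2} elements. -/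
/-- Counting solutions of a quadratic congruence (the '-1 branch', contributing
`q^{k/2}`): in a discrete valuation ring `O` with residue field of size `q` and
residue characteristic ≠ 2, let `a` have valuation `k/2` (with `k = 2·k2` even) and
`k < t`. The set of classes `⋆ ∈ π^{max(0,t-s)}O/π^tO` with `(⋆ - a)² ≡ a² mod π^t`
and `⋆ ≡ 2a mod π^{t-k/2}` (i.e. `v(⋆) = v(2a)`) is nonempty iff `t - s ≤ k/2`,
in which case it has exactly `q^{k/2}` elements. -/
theorem count_quadratic_congruence_minus_branch {R : Type*} [CommRing R] [IsDomain R]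
    [IsDiscreteValuationRing R]
    (π : R) (hπ : Irreducible π) (h2 : IsUnit (2 : R))
    (q : ℕ) (hq : Nat.card (R ⧸ Ideal.span {π}) = q)
    (a : R) (u : Rˣ) (k2 : ℕ) (ha : a = π ^ k2 * (u : R))
    (t s : ℕ) (ht : 2 * k2 < t)
    (S : Set (R ⧸ Ideal.span {π} ^ t))
    (hS : S = {x : R ⧸ Ideal.span {π} ^ t |
        x ∈ (Ideal.span {π} ^ (t - s)).map (Ideal.Quotient.mk (Ideal.span {π} ^ t)) ∧
        (x - Ideal.Quotient.mk (Ideal.span {π} ^ t) a) ^ 2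
          = (Ideal.Quotient.mk (Ideal.span {π} ^ t) a) ^ 2 ∧
        x - Ideal.Quotient.mk (Ideal.span {π} ^ t) (2 * a)
          ∈ (Ideal.span {π} ^ (t - k2)).map
              (Ideal.Quotient.mk (Ideal.span {π} ^ t))}) :
    (S.Nonempty ↔ t - s ≤ k2) ∧ (t - s ≤ k2 → Nat.card S = q ^ k2) := by
  subst hS
  set I : Ideal R := Ideal.span {π} with hI
  set f : R →+* R ⧸ I ^ t := Ideal.Quotient.mk (I ^ t) with hf
  have hπ0 : π ≠ 0 := hπ.ne_zero
  have hmem : ∀ (n : ℕ) (x : R), x ∈ I ^ n ↔ π ^ n ∣ x := by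
    intro n x
    rw [hI, Ideal.span_singleton_pow, Ideal.mem_span_singleton]
  have hsplit : π ^ (t - k2) * π ^ k2 = π ^ t := by
    rw [← pow_add]; congr 1; omega
  have h2a : 2 * a = π ^ k2 * (2 * u) := by rw [ha]; ring
  -- `π^(k2+1)` does not divide `2a`
  have hv2a : ¬ π ^ (k2 + 1) ∣ 2 * a := by
    rintro ⟨c, hc⟩
    rw [h2a, pow_succ, mul_assoc] at hc
    have : (2 : R) * u = π * c := mul_left_cancel₀ (pow_ne_zero _ hπ0) hc
    exact hπ.not_isUnit (isUnit_of_mul_isUnit_left (this ▸ h2.mul u.isUnit))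
  -- the square condition is automatic on the coset of `2a`
  have hsq : ∀ x : R ⧸ I ^ t, x - f (2 * a) ∈ (I ^ (t - k2)).map f →
      (x - f a) ^ 2 = (f a) ^ 2 := by
    intro x hx
    obtain ⟨y, hy, hfy⟩ :=
      (Ideal.mem_map_iff_of_surjective f Ideal.Quotient.mk_surjective).mp hx
    obtain ⟨c, hc⟩ := (hmem _ y).mp hy
    have hx' : x = f (2 * a + y) := by rw [map_add, hfy]; ring
    have hzero : f (y * (2 * a) + y ^ 2) = 0 := by
      rw [Ideal.Quotient.eq_zero_iff_mem, hmem]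
      refine dvd_add ⟨c * (2 * u), ?_⟩ ?_
      · rw [hc, h2a, ← hsplit]; ring
      · rw [hc, mul_pow, ← pow_mul]
        exact Dvd.dvd.mul_right (pow_dvd_pow π (by omega)) _
    have : (x - f a) ^ 2 - (f a) ^ 2 = f (y * (2 * a) + y ^ 2) := by
      rw [hx', ← map_sub, ← map_pow, ← map_pow, ← map_sub]
      congr 1; ring
    rw [hzero] at this
    linear_combination this
  have hk2t : k2 + 1 ≤ t - k2 := by omega
  constructor
  · constructor
    · rintro ⟨x, hx⟩
      obtain ⟨hxM, -, hxN⟩ := hx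
      obtain ⟨y, hy, hfy⟩ :=
        (Ideal.mem_map_iff_of_surjective f Ideal.Quotient.mk_surjective).mp hxN
      obtain ⟨z, hz, hfz⟩ :=
        (Ideal.mem_map_iff_of_surjective f Ideal.Quotient.mk_surjective).mp hxM
      have hxx : f (2 * a + y) = f z := by
        rw [map_add, hfy, hfz]; ring
      have hsub : 2 * a + y - z ∈ I ^ t := Ideal.Quotient.eq.mp hxx
      have hts : (2 * a + y) ∈ I ^ (t - s) := by
        have h1 : 2 * a + y - z ∈ I ^ (t - s) :=
          Ideal.pow_le_pow_right (by omega) hsub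
        have := Ideal.add_mem _ h1 hz
        simpa using this
      by_contra hcon
      push_neg at hcon
      have hd1 : π ^ (k2 + 1) ∣ 2 * a + y :=
        dvd_trans (pow_dvd_pow π (by omega)) ((hmem _ _).mp hts)
      have hd2 : π ^ (k2 + 1) ∣ y :=
        dvd_trans (pow_dvd_pow π hk2t) ((hmem _ _).mp hy)
      exact hv2a (by simpa using dvd_sub hd1 hd2)
    · intro h
      refine ⟨f (2 * a), ?_⟩
      have h2aM : (2 * a) ∈ I ^ (t - s) := by
        rw [hmem]
        exact dvd_trans (pow_dvd_pow π (by omega)) ⟨2 * u, h2a⟩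
      refine ⟨Ideal.mem_map_of_mem f h2aM, hsq _ (by simp), by simp⟩
  · intro h
    -- the multiplication-by-`π^(t-k2)` map
    have hcomap : I ^ k2 ≤
        Submodule.comap (LinearMap.lsmul R R (π ^ (t - k2))) (I ^ t) := by
      intro r hr
      rw [Submodule.mem_comap, LinearMap.lsmul_apply, smul_eq_mul, hmem, ← hsplit]
      exact mul_dvd_mul_left _ ((hmem _ _).mp hr)
    set F : (R ⧸ I ^ k2) →ₗ[R] (R ⧸ I ^ t) :=
      Submodule.mapQ (I ^ k2) (I ^ t) (LinearMap.lsmul R R (π ^ (t - k2))) hcomap with hF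
    have hFmk : ∀ r : R, F (Ideal.Quotient.mk (I ^ k2) r) = f (π ^ (t - k2) * r) := by
      intro r
      rw [hF, ← Ideal.Quotient.mk_eq_mk, Submodule.mapQ_apply, LinearMap.lsmul_apply,
        smul_eq_mul, Ideal.Quotient.mk_eq_mk]
    have hFinj : Function.Injective F := by
      rw [← LinearMap.ker_eq_bot, Submodule.eq_bot_iff]
      intro z hz
      obtain ⟨r, rfl⟩ := Ideal.Quotient.mk_surjective z
      rw [LinearMap.mem_ker, hFmk, hf, Ideal.Quotient.eq_zero_iff_mem, hmem, ← hsplit] at hz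
      rw [Ideal.Quotient.eq_zero_iff_mem, hmem]
      exact (mul_dvd_mul_iff_left (pow_ne_zero (t - k2) hπ0)).mp hz
    set G : (R ⧸ I ^ k2) → (R ⧸ I ^ t) := fun z => f (2 * a) + F z with hG
    have hGinj : Function.Injective G := fun x y hxy => by
      apply hFinj; exact add_left_cancel hxy
    have hrange : {x : R ⧸ I ^ t |
        x ∈ (I ^ (t - s)).map f ∧
        (x - f a) ^ 2 = (f a) ^ 2 ∧
        x - f (2 * a) ∈ (I ^ (t - k2)).map f} = Set.range G := by
      ext x
      simp only [Set.mem_setOf_eq, Set.mem_range]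
      constructor
      · rintro ⟨hxM, -, hxN⟩
        obtain ⟨y, hy, hfy⟩ :=
          (Ideal.mem_map_iff_of_surjective f Ideal.Quotient.mk_surjective).mp hxN
        obtain ⟨c, hc⟩ := (hmem _ y).mp hy
        refine ⟨Ideal.Quotient.mk _ c, ?_⟩
        simp only [hG]
        rw [hFmk, ← hc, hfy]; ring
      · rintro ⟨z, rfl⟩
        obtain ⟨r, rfl⟩ := Ideal.Quotient.mk_surjective z
        simp only [hG]
        have hNmem : f (2 * a) + F (Ideal.Quotient.mk _ r) - f (2 * a)
            ∈ (I ^ (t - k2)).map f := by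
          rw [hFmk]
          simpa using Ideal.mem_map_of_mem f ((hmem (t - k2) _).mpr (dvd_mul_right _ _))
        refine ⟨?_, hsq _ hNmem, hNmem⟩
        · rw [hFmk]
          refine Ideal.add_mem _ ?_ ?_
          · exact Ideal.mem_map_of_mem f ((hmem _ _).mpr
              (dvd_trans (pow_dvd_pow π (by omega)) ⟨2 * u, h2a⟩))
          · exact Ideal.mem_map_of_mem f ((hmem _ _).mpr
              (dvd_trans (pow_dvd_pow π (by omega)) (dvd_mul_right _ _)))
      -- cardinality
    have hP : I.IsPrime := (Ideal.span_singleton_prime hπ0).mpr hπ.prime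
    have hIbot : I ≠ ⊥ := by
      rw [hI, ne_eq, Ideal.span_singleton_eq_bot]; exact hπ0
    have hcard : Nat.card (R ⧸ I ^ k2) = q ^ k2 := by
      have := cardQuot_pow_of_prime (P := I) hIbot (i := k2)
      rwa [Submodule.cardQuot_apply, Submodule.cardQuot_apply, hq] at this
    rw [hrange, Nat.card_range_of_injective hGinj, hcard]
end

section
/- Case B head sum: let q ≥ 2, k ≥ 0 even, s > k/2, and m, ε integers. Define A(s) = ∑_{t=0}^{k} (-1)^{t+1} (2m - 2s + t + ε) q^{min(⌊t/2⌋, s)}. Then A(s) + A(s-1) = 2(1 + q + ⋯ + q^{k/2 - 1}) + q^{k/2} - (4m - 4s + 3 + 2k + 2ε) q^{k/2}. -/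
lemma caseB_aux (q C : ℤ) (k2 : ℕ) :
    ∑ t ∈ Finset.range (2 * k2 + 1), (-1 : ℤ) ^ (t + 1) * (C + 2 * t) * q ^ (t / 2)
      = 2 * (∑ i ∈ Finset.range k2, q ^ i) + q ^ k2 - (C + 4 * k2 + 1) * q ^ k2 := by
  induction k2 with
  | zero => simp
  | succ n ih =>
    have h1 : 2 * (n + 1) + 1 = (2 * n + 1) + 1 + 1 := by ring
    rw [h1, Finset.sum_range_succ, Finset.sum_range_succ, ih]
    have e1 : (2 * n + 1) / 2 = n := by omega
    have e2 : (2 * n + 1 + 1) / 2 = n + 1 := by omega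
    rw [e1, e2, Finset.sum_range_succ]
    have o1 : (-1 : ℤ) ^ (2 * n + 1 + 1) = 1 := by
      rw [pow_succ, pow_succ, pow_mul]; ring_nf
    have o2 : (-1 : ℤ) ^ (2 * n + 1 + 1 + 1) = -1 := by
      rw [pow_succ, o1]; ring
    rw [o1, o2]
    push_cast
    ring

/-- Case B head sum: with `k = 2·k2` even, `s > k/2` and
`A(s) = ∑_{t=0}^{k} (-1)^{t+1}(2m-2s+t+ε) q^{min(⌊t/2⌋, s)}`, one has
`A(s) + A(s-1) = 2(1 + q + ⋯ + q^{k/2-1}) + q^{k/2} - (4m - 4s + 3 + 2k + 2ε) q^{k/2}`. -/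
theorem caseB_head_sum (q : ℤ) (hq : 2 ≤ q) (k k2 : ℕ) (hk : k = 2 * k2)
    (m ε : ℤ) (s : ℕ) (hs : k2 < s)
    (A : ℕ → ℤ)
    (hA : ∀ s' : ℕ, A s' = ∑ t ∈ Finset.range (k + 1),
        (-1 : ℤ) ^ (t + 1) * (2 * m - 2 * (s' : ℤ) + (t : ℤ) + ε)
          * q ^ (min (t / 2) s')) :
    A s + A (s - 1)
      = 2 * (∑ i ∈ Finset.range k2, q ^ i) + q ^ k2
        - (4 * m - 4 * (s : ℤ) + 3 + 2 * (k : ℤ) + 2 * ε) * q ^ k2 := by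
  subst hk
  rw [hA, hA, ← Finset.sum_add_distrib]
  have hcast : ((s - 1 : ℕ) : ℤ) = (s : ℤ) - 1 := by
    have : 1 ≤ s := by omega
    push_cast [this]; ring
  have := caseB_aux q (4 * m - 4 * s + 2 + 2 * ε) k2
  calc ∑ t ∈ Finset.range (2 * k2 + 1),
        ((-1 : ℤ) ^ (t + 1) * (2 * m - 2 * (s : ℤ) + (t : ℤ) + ε) * q ^ (min (t / 2) s)
          + (-1 : ℤ) ^ (t + 1) * (2 * m - 2 * ((s - 1 : ℕ) : ℤ) + (t : ℤ) + ε)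
            * q ^ (min (t / 2) (s - 1)))
      = ∑ t ∈ Finset.range (2 * k2 + 1),
          (-1 : ℤ) ^ (t + 1) * ((4 * m - 4 * s + 2 + 2 * ε) + 2 * t) * q ^ (t / 2) := by
        apply Finset.sum_congr rfl
        intro t ht
        have ht' : t ≤ 2 * k2 := by simpa using Nat.lt_succ_iff.mp (Finset.mem_range.mp ht)
        have h1 : min (t / 2) s = t / 2 := by omega
        have h2 : min (t / 2) (s - 1) = t / 2 := by omega
        rw [h1, h2, hcast]
        ring
    _ = 2 * (∑ i ∈ Finset.range k2, q ^ i) + q ^ k2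
        - (4 * m - 4 * (s : ℤ) + 3 + 2 * ((2 * k2 : ℕ) : ℤ) + 2 * ε) * q ^ k2 := by
        rw [this]; push_cast; ring
end
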